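/- Fix d ∈ ℕ and a, x ∈ ℝ, and define the Gould–Hopper type polynomials g_i^{(d+1)}(x, a, μ) = Σ_{k : (d+1)k ≤ i} (γ_μ(i) / (k! γ_μ(i − (d+1)k))) a^k x^{i−(d+1)k}. Then for every ω ∈ ℝ, the generating relation e^{a ω^{d+1}} e_μ(xω) = Σ_{i=0}^∞ g_i^{(d+1)}(x, a, μ) ω^i / γ_μ(i) holds. -/

import Mathlib

open scoped BigOperators

/-- The Dunkl coefficients γ_μ(i). -/
noncomputable def gammaMu (μ : ℝ) (i : ℕ) : ℝ :=
  if Even i then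
    2 ^ i * (Nat.factorial (i / 2)) *
      Real.Gamma (((i / 2 : ℕ) : ℝ) + μ + 1 / 2) / Real.Gamma (μ + 1 / 2)
  else
    2 ^ i * (Nat.factorial (i / 2)) *
      Real.Gamma (((i / 2 : ℕ) : ℝ) + μ + 3 / 2) / Real.Gamma (μ + 1 / 2)

/-- θ_i = 0 if i is even, 1 if i is odd. -/
noncomputable def thetaFn (i : ℕ) : ℝ := if Even i then 0 else 1

/-- The Dunkl exponential e_μ(x) = Σ x^i / γ_μ(i). -/
noncomputable def dunklExp (μ : ℝ) (x : ℝ) : ℝ := ∑' i : ℕ, x ^ i / gammaMu μ i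

/-- The Dunkl operator (Λ_μ f)(x) = f'(x) + μ (f(x) - f(-x)) / x. -/
noncomputable def dunklOp (μ : ℝ) (f : ℝ → ℝ) (x : ℝ) : ℝ :=
  deriv f x + μ * (f x - f (-x)) / x

/-- Q(t) = Σ c_i t^i / γ_μ(i). -/
noncomputable def Qf (μ : ℝ) (c : ℕ → ℝ) (t : ℝ) : ℝ := ∑' i : ℕ, c i * t ^ i / gammaMu μ i

/-- The Dunkl–Appell polynomials q_i(x) = Σ_{j=0}^i (γ_μ(i)/(γ_μ(j)γ_μ(i-j))) c_{i-j} x^j. -/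
noncomputable def qPoly (μ : ℝ) (c : ℕ → ℝ) (i : ℕ) (x : ℝ) : ℝ :=
  ∑ j ∈ Finset.range (i + 1),
    gammaMu μ i / (gammaMu μ j * gammaMu μ (i - j)) * c (i - j) * x ^ j

/-- The operators K_n^μ(f;x). -/
noncomputable def Kop (μ : ℝ) (c : ℕ → ℝ) (n : ℕ) (f : ℝ → ℝ) (x : ℝ) : ℝ :=
  1 / (Qf μ c 1 * dunklExp μ (n * x)) *
    ∑' i : ℕ, qPoly μ c i (n * x) / gammaMu μ i * f (((i : ℝ) + 2 * μ * thetaFn i) / n)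

/-- Gould–Hopper type polynomials g_i^{(d+1)}(x, a, μ). -/
noncomputable def gouldHopper (d : ℕ) (x a μ : ℝ) (i : ℕ) : ℝ :=
  ∑ k ∈ Finset.range (i / (d + 1) + 1),
    gammaMu μ i / (Nat.factorial k * gammaMu μ (i - (d + 1) * k)) *
      a ^ k * x ^ (i - (d + 1) * k)

lemma gammaMu_pos {μ : ℝ} (hμ : μ + 1 / 2 > 0) (i : ℕ) : 0 < gammaMu μ i := by
  have h0 : 0 < Real.Gamma (μ + 1 / 2) := Real.Gamma_pos_of_pos hμ
  have hc : (0 : ℝ) ≤ ((i / 2 : ℕ) : ℝ) := Nat.cast_nonneg _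
  unfold gammaMu
  split
  · have h1 : 0 < Real.Gamma (((i / 2 : ℕ) : ℝ) + μ + 1 / 2) :=
      Real.Gamma_pos_of_pos (by linarith)
    have h2 : (0 : ℝ) < (Nat.factorial (i / 2) : ℝ) := by
      exact_mod_cast Nat.factorial_pos _
    positivity
  · have h1 : 0 < Real.Gamma (((i / 2 : ℕ) : ℝ) + μ + 3 / 2) :=
      Real.Gamma_pos_of_pos (by linarith)
    have h2 : (0 : ℝ) < (Nat.factorial (i / 2) : ℝ) := by
      exact_mod_cast Nat.factorial_pos _
    positivity

lemma gammaMu_succ {μ : ℝ} (hμ : μ + 1 / 2 > 0) (i : ℕ) :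
    gammaMu μ (i + 1) =
      gammaMu μ i * (if Even i then (i : ℝ) + 2 * μ + 1 else (i : ℝ) + 1) := by
  have h0 : Real.Gamma (μ + 1 / 2) ≠ 0 := ne_of_gt (Real.Gamma_pos_of_pos hμ)
  rcases Nat.even_or_odd i with ⟨m, rfl⟩ | ⟨m, rfl⟩
  · have he : Even (m + m) := ⟨m, rfl⟩
    have ho : ¬ Even (m + m + 1) := by simp [Nat.even_add_one, he]
    have h1 : (m + m) / 2 = m := by omega
    have h2 : (m + m + 1) / 2 = m := by omega
    have hpos : (0 : ℝ) < (m : ℝ) + μ + 1 / 2 := by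
      have : (0 : ℝ) ≤ (m : ℝ) := Nat.cast_nonneg _
      linarith
    have hΓ : Real.Gamma ((m : ℝ) + μ + 3 / 2) =
        ((m : ℝ) + μ + 1 / 2) * Real.Gamma ((m : ℝ) + μ + 1 / 2) := by
      rw [show (m : ℝ) + μ + 3 / 2 = ((m : ℝ) + μ + 1 / 2) + 1 by ring]
      exact Real.Gamma_add_one (ne_of_gt hpos)
    simp only [gammaMu, if_pos he, if_neg ho, h1, h2, hΓ]
    rw [pow_succ]
    field_simp
    push_cast
    ring
  · have ho : ¬ Even (2 * m + 1) := by simp [Nat.even_add_one, Nat.even_add_one]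
    have he : Even (2 * m + 1 + 1) := by
      refine ⟨m + 1, by omega⟩
    have h1 : (2 * m + 1) / 2 = m := by omega
    have h2 : (2 * m + 1 + 1) / 2 = m + 1 := by omega
    simp only [gammaMu, if_pos he, if_neg ho, h1, h2]
    have harg : ((m + 1 : ℕ) : ℝ) + μ + 1 / 2 = (m : ℝ) + μ + 3 / 2 := by
      push_cast; ring
    rw [harg, Nat.factorial_succ, pow_succ]
    field_simp
    push_cast
    ring

lemma summable_norm_dunklSeries {μ : ℝ} (hμ : μ + 1 / 2 > 0) (y : ℝ) :
    Summable fun j : ℕ => ‖y ^ j / gammaMu μ j‖ := by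
  apply summable_of_ratio_norm_eventually_le (r := 1 / 2) (by norm_num)
  filter_upwards [Filter.eventually_ge_atTop (⌈2 * |y|⌉₊ + 1)] with j hj
  set c : ℝ := if Even j then (j : ℝ) + 2 * μ + 1 else (j : ℝ) + 1 with hc
  have hjc : (j : ℝ) ≤ c := by
    rw [hc]; split
    · linarith
    · linarith
  have hcy : 2 * |y| ≤ c := by
    have h1 : 2 * |y| ≤ (⌈2 * |y|⌉₊ : ℝ) := Nat.le_ceil _
    have h2 : ((⌈2 * |y|⌉₊ : ℕ) : ℝ) ≤ (j : ℝ) := by exact_mod_cast le_of_lt hj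
    linarith
  have hcpos : 0 < c := by
    have : (1 : ℝ) ≤ (j : ℝ) := by exact_mod_cast Nat.one_le_iff_ne_zero.mpr (by omega)
    linarith
  have hγ : 0 < gammaMu μ j := gammaMu_pos hμ j
  have hkey : ‖y ^ (j + 1) / gammaMu μ (j + 1)‖ = |y| / c * ‖y ^ j / gammaMu μ j‖ := by
    rw [gammaMu_succ hμ j, ← hc]
    rw [Real.norm_eq_abs, Real.norm_eq_abs, abs_div, abs_div, abs_mul,
      abs_of_pos hγ, abs_of_pos hcpos, abs_pow, abs_pow, pow_succ]
    field_simp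
  rw [norm_norm, norm_norm, hkey]
  have h3 : |y| / c ≤ 1 / 2 := by
    rw [div_le_div_iff₀ hcpos (by norm_num)]
    linarith
  have h4 : (0 : ℝ) ≤ ‖y ^ j / gammaMu μ j‖ := norm_nonneg _
  nlinarith

/-- generating relation for Gould–Hopper type polynomials. -/
theorem gouldHopper_generating (μ : ℝ) (hμ : μ + 1 / 2 > 0) (d : ℕ) (a x : ℝ) (ω : ℝ) :
    Real.exp (a * ω ^ (d + 1)) * dunklExp μ (x * ω) =
      ∑' i : ℕ, gouldHopper d x a μ i * ω ^ i / gammaMu μ i := by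
  set α : ℝ := a * ω ^ (d + 1) with hα
  set f : ℕ → ℝ := fun k => α ^ k / (Nat.factorial k : ℝ) with hf
  set g : ℕ → ℝ := fun j => (x * ω) ^ j / gammaMu μ j with hg
  have hγpos : ∀ i, 0 < gammaMu μ i := gammaMu_pos hμ
  have hfnorm : Summable fun k => ‖f k‖ := by
    apply (Real.summable_pow_div_factorial |α|).congr
    intro k
    rw [hf]
    simp [Real.norm_eq_abs, abs_div, abs_pow, Nat.abs_cast]
  have hgnorm : Summable fun j => ‖g j‖ := summable_norm_dunklSeries hμ (x * ω)
  have hLHS : Real.exp α * dunklExp μ (x * ω) = ∑' p : ℕ × ℕ, f p.1 * g p.2 := by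
    rw [Real.exp_eq_exp_ℝ, NormedSpace.exp_eq_tsum_div, dunklExp]
    exact tsum_mul_tsum_of_summable_norm hfnorm hgnorm
  set ψ : ℕ × ℕ → ℕ × ℕ := fun p => ((d + 1) * p.1 + p.2, p.1) with hψdef
  have hψ : Function.Injective ψ := by
    intro p q h
    simp only [hψdef, Prod.mk.injEq] at h
    obtain ⟨h1, h2⟩ := h
    rw [h2] at h1
    exact Prod.ext h2 (Nat.add_left_cancel h1)
  set G : ℕ × ℕ → ℝ :=
    fun q => if (d + 1) * q.2 ≤ q.1 then f q.2 * g (q.1 - (d + 1) * q.2) else 0 with hGdef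
  have hGψ : ∀ p : ℕ × ℕ, G (ψ p) = f p.1 * g p.2 := by
    intro p
    simp only [hGdef, hψdef]
    rw [if_pos (Nat.le_add_right _ _), Nat.add_sub_cancel_left]
  have hGsupp : ∀ q ∉ Set.range ψ, G q = 0 := by
    intro q hq
    by_contra h
    apply hq
    have hle : (d + 1) * q.2 ≤ q.1 := by
      by_contra hle
      exact h (by simp [hGdef, hle])
    exact ⟨(q.2, q.1 - (d + 1) * q.2), Prod.ext (by simp [hψdef]; omega) rfl⟩
  have hF : Summable fun p : ℕ × ℕ => f p.1 * g p.2 :=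
    summable_mul_of_summable_norm hfnorm hgnorm
  have hGψsum : Summable (G ∘ ψ) := hF.congr fun p => (hGψ p).symm
  have hGsum : Summable G := (hψ.summable_iff hGsupp).mp hGψsum
  have h1 : ∑' p : ℕ × ℕ, f p.1 * g p.2 = ∑' q, G q := by
    calc ∑' p : ℕ × ℕ, f p.1 * g p.2 = ∑' p, G (ψ p) := (tsum_congr hGψ).symm
      _ = ∑' q, G q := hψ.tsum_eq (Function.support_subset_iff'.mpr hGsupp)
  have hkzero : ∀ i : ℕ, ∀ k ∉ Finset.range (i / (d + 1) + 1), G (i, k) = 0 := by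
    intro i k hk
    rw [Finset.mem_range, not_lt] at hk
    have hnle : ¬ (d + 1) * k ≤ i := by
      intro hle
      have : k ≤ i / (d + 1) :=
        (Nat.le_div_iff_mul_le (by omega)).mpr (by rw [mul_comm]; exact hle)
      omega
    simp [hGdef, hnle]
  have h2 : ∑' q : ℕ × ℕ, G q = ∑' i, ∑' k, G (i, k) := by
    refine Summable.tsum_prod' hGsum fun i => ?_
    exact summable_of_ne_finset_zero (hkzero i)
  have h3 : ∀ i : ℕ, ∑' k, G (i, k) = gouldHopper d x a μ i * ω ^ i / gammaMu μ i := by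
    intro i
    rw [tsum_eq_sum (hkzero i), gouldHopper, Finset.sum_mul, Finset.sum_div]
    apply Finset.sum_congr rfl
    intro k hk
    rw [Finset.mem_range] at hk
    have hki : (d + 1) * k ≤ i := by
      have h5 : k ≤ i / (d + 1) := by omega
      have h6 := (Nat.le_div_iff_mul_le (k := d + 1) (by omega)).mp h5
      rw [mul_comm]; exact h6
    simp only [hGdef, if_pos hki]
    set j : ℕ := i - (d + 1) * k with hj
    have hji : (d + 1) * k + j = i := by omega
    have hω : ω ^ i = (ω ^ (d + 1)) ^ k * ω ^ j := by
      rw [← pow_mul, ← pow_add, hji]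
    have hγi : gammaMu μ i ≠ 0 := ne_of_gt (hγpos i)
    have hγj : gammaMu μ j ≠ 0 := ne_of_gt (hγpos j)
    have hfact : (Nat.factorial k : ℝ) ≠ 0 := by
      exact_mod_cast Nat.factorial_ne_zero k
    show α ^ k / (Nat.factorial k : ℝ) * ((x * ω) ^ j / gammaMu μ j) =
      gammaMu μ i / ((Nat.factorial k : ℝ) * gammaMu μ j) * a ^ k * x ^ j * ω ^ i /
        gammaMu μ i
    rw [hα, mul_pow a (ω ^ (d + 1)), mul_pow x ω, hω]
    field_simp
  rw [hLHS, h1, h2]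
  exact tsum_congr h3
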